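/- Robbins–Siegmund lemma: Let (Ω, F, P) be a probability space and (F^k)_{k≥0} an increasing sequence of sub-σ-algebras of F. Suppose a^k, b^k, c^k, ζ^k are finite nonnegative F^k-measurable random variables satisfying E[a^{k+1} | F^k] ≤ (1 + ζ^k) a^k − b^k + c^k for all k ≥ 0, and Σ_{k=0}^∞ c^k < ∞ and Σ_{k=0}^∞ ζ^k < ∞ almost surely. Then lim_{k→∞} a^k exists almost surely (and is finite), and Σ_{k=0}^∞ b^k < ∞ almost surely. -/

import Mathlib

open MeasureTheory Filter

namespace RSaux

variable (ζ : ℕ → ℝ)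

noncomputable def P (k : ℕ) : ℝ := ∏ j ∈ Finset.range k, (1 + ζ j)

lemma one_le_P (hζ : ∀ k, 0 ≤ ζ k) (k : ℕ) : 1 ≤ P ζ k := by
  rw [P]
  calc (1:ℝ) = ∏ _j ∈ Finset.range k, (1:ℝ) := by simp
  _ ≤ ∏ j ∈ Finset.range k, (1 + ζ j) :=
    Finset.prod_le_prod (fun _ _ => zero_le_one) (fun j _ => by linarith [hζ j])

lemma P_pos (hζ : ∀ k, 0 ≤ ζ k) (k : ℕ) : 0 < P ζ k :=
  lt_of_lt_of_le one_pos (one_le_P ζ hζ k)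

lemma P_mono (hζ : ∀ k, 0 ≤ ζ k) : Monotone (P ζ) := by
  apply monotone_nat_of_le_succ
  intro k
  have h1 : P ζ (k+1) = P ζ k * (1 + ζ k) := Finset.prod_range_succ _ _
  nlinarith [P_pos ζ hζ k, hζ k]

lemma P_le (hζ : ∀ k, 0 ≤ ζ k) (hs : Summable ζ) (k : ℕ) :
    P ζ k ≤ Real.exp (∑' j, ζ j) := by
  have h1 : P ζ k ≤ ∏ j ∈ Finset.range k, Real.exp (ζ j) := by
    apply Finset.prod_le_prod
    · intro j _; linarith [hζ j]
    · intro j _; linarith [Real.add_one_le_exp (ζ j)]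
  rw [← Real.exp_sum] at h1
  refine h1.trans (Real.exp_le_exp.2 ?_)
  exact hs.sum_le_tsum _ (fun j _ => hζ j)

/-- Deterministic part of Robbins–Siegmund. -/
lemma pointwise (a b c : ℕ → ℝ) (ha : ∀ k, 0 ≤ a k) (hb : ∀ k, 0 ≤ b k)
    (hc : ∀ k, 0 ≤ c k) (hζ : ∀ k, 0 ≤ ζ k) (hcs : Summable c) (hζs : Summable ζ)
    (l : ℝ)
    (hconv : Tendsto (fun k => a k / P ζ k
      + ∑ j ∈ Finset.range k, (b j - c j) / P ζ (j+1)) atTop (nhds l)) :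
    (∃ l' : ℝ, Tendsto a atTop (nhds l')) ∧ Summable b := by
  set X : ℕ → ℝ := fun k => a k / P ζ k + ∑ j ∈ Finset.range k, (b j - c j) / P ζ (j+1) with hX
  -- P converges
  have hPb : ∀ k, P ζ k ≤ Real.exp (∑' j, ζ j) := P_le ζ hζ hζs
  have hPmono := P_mono ζ hζ
  have hPtend : Tendsto (P ζ) atTop (nhds (⨆ k, P ζ k)) :=
    tendsto_atTop_ciSup hPmono ⟨_, fun x ⟨k, hk⟩ => hk ▸ hPb k⟩
  -- c / P summable
  have hcP : Summable (fun j => c j / P ζ (j+1)) := by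
    apply Summable.of_nonneg_of_le (fun j => div_nonneg (hc j) (P_pos ζ hζ _).le)
      (fun j => div_le_self (hc j) (one_le_P ζ hζ _)) hcs
  -- partial sums of c/P converge
  have hStend : Tendsto (fun k => ∑ j ∈ Finset.range k, c j / P ζ (j+1)) atTop
      (nhds (∑' j, c j / P ζ (j+1))) := hcP.hasSum.tendsto_sum_nat
  -- rewrite X
  have hXeq : ∀ k, X k = a k / P ζ k + (∑ j ∈ Finset.range k, b j / P ζ (j+1))
      - ∑ j ∈ Finset.range k, c j / P ζ (j+1) := by
    intro k
    rw [hX]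
    simp only [sub_div, Finset.sum_sub_distrib]
    ring
  -- partial sums of b/P bounded
  obtain ⟨CX, hCX⟩ := hconv.bddAbove_range
  obtain ⟨CS, hCS⟩ := hStend.bddAbove_range
  have hBle : ∀ k, ∑ j ∈ Finset.range k, b j / P ζ (j+1) ≤ CX + CS := by
    intro k
    have h1 : X k ≤ CX := hCX ⟨k, rfl⟩
    have h2 : (∑ j ∈ Finset.range k, c j / P ζ (j+1)) ≤ CS := hCS ⟨k, rfl⟩
    have h3 := hXeq k
    have h4 : 0 ≤ a k / P ζ k := div_nonneg (ha k) (P_pos ζ hζ k).le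
    rw [h3] at h1
    linarith
  -- b / P summable
  have hbP : Summable (fun j => b j / P ζ (j+1)) :=
    summable_of_sum_range_le (fun j => div_nonneg (hb j) (P_pos ζ hζ _).le) hBle
  -- b summable
  have hbs : Summable b := by
    apply Summable.of_nonneg_of_le hb (fun j => ?_) (hbP.mul_right (Real.exp (∑' j, ζ j)))
    have h1 : b j = b j / P ζ (j+1) * P ζ (j+1) :=
      (div_mul_cancel₀ (b j) (P_pos ζ hζ _).ne').symm
    nth_rewrite 1 [h1]
    exact mul_le_mul_of_nonneg_left (hPb (j+1)) (div_nonneg (hb j) (P_pos ζ hζ _).le)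
  refine ⟨?_, hbs⟩
  have hBtend : Tendsto (fun k => ∑ j ∈ Finset.range k, b j / P ζ (j+1)) atTop
      (nhds (∑' j, b j / P ζ (j+1))) := hbP.hasSum.tendsto_sum_nat
  -- a / P converges
  have haP : Tendsto (fun k => a k / P ζ k) atTop
      (nhds (l - (∑' j, b j / P ζ (j+1)) + ∑' j, c j / P ζ (j+1))) := by
    have := (hconv.sub hBtend).add hStend
    apply this.congr
    intro k
    have := hXeq k
    simp only [X] at this ⊢
    linarith
  refine ⟨_, (haP.mul hPtend).congr (fun k => ?_)⟩
  exact div_mul_cancel₀ (a k) (P_pos ζ hζ k).ne'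

end RSaux

/-- Robbins–Siegmund lemma: if nonnegative adapted (integrable) random variables satisfy
`E[a^{k+1} | F^k] ≤ (1 + ζ^k) a^k − b^k + c^k` with `∑ c^k < ∞` and `∑ ζ^k < ∞` a.s.,
then `a^k` converges a.s. (to a finite limit) and `∑ b^k < ∞` a.s. -/
theorem robbins_siegmund
    {Ω : Type*} {m0 : MeasurableSpace Ω} {μ : Measure Ω} [IsProbabilityMeasure μ]
    (ℱ : Filtration ℕ m0)
    (a b c ζ : ℕ → Ω → ℝ)
    (ha_nonneg : ∀ k ω, 0 ≤ a k ω) (hb_nonneg : ∀ k ω, 0 ≤ b k ω)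
    (hc_nonneg : ∀ k ω, 0 ≤ c k ω) (hζ_nonneg : ∀ k ω, 0 ≤ ζ k ω)
    (ha_adapted : Adapted ℱ a) (hb_adapted : Adapted ℱ b)
    (hc_adapted : Adapted ℱ c) (hζ_adapted : Adapted ℱ ζ)
    (ha_int : ∀ k, Integrable (a k) μ) (hb_int : ∀ k, Integrable (b k) μ)
    (hc_int : ∀ k, Integrable (c k) μ) (hζ_int : ∀ k, Integrable (ζ k) μ)
    (hineq : ∀ k, ∀ᵐ ω ∂μ,
      (μ[a (k + 1) | ℱ k]) ω ≤ (1 + ζ k ω) * a k ω - b k ω + c k ω)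
    (hc_sum : ∀ᵐ ω ∂μ, Summable fun k => c k ω)
    (hζ_sum : ∀ᵐ ω ∂μ, Summable fun k => ζ k ω) :
    ∀ᵐ ω ∂μ, (∃ l : ℝ, Tendsto (fun k => a k ω) atTop (nhds l)) ∧
      Summable fun k => b k ω := by

  classical
  have ha_adapted := ha_adapted.stronglyAdapted
  have hb_adapted := hb_adapted.stronglyAdapted
  have hc_adapted := hc_adapted.stronglyAdapted
  have hζ_adapted := hζ_adapted.stronglyAdapted
  -- the compensating product process
  set p : ℕ → Ω → ℝ := fun k ω => RSaux.P (fun j => ζ j ω) k with hp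
  have hp1 : ∀ k ω, 1 ≤ p k ω := fun k ω => RSaux.one_le_P _ (fun j => hζ_nonneg j ω) k
  have hppos : ∀ k ω, 0 < p k ω := fun k ω => RSaux.P_pos _ (fun j => hζ_nonneg j ω) k
  have hpsucc : ∀ k ω, p (k+1) ω = p k ω * (1 + ζ k ω) := fun k ω =>
    Finset.prod_range_succ _ _
  -- measurability of p
  have hpSM : ∀ n k, k ≤ n + 1 → StronglyMeasurable[ℱ n] (p k) := by
    intro n k hk
    apply Finset.stronglyMeasurable_fun_prod
    intro j hj
    rw [Finset.mem_range] at hj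
    exact stronglyMeasurable_const.add
      ((hζ_adapted j).mono (ℱ.mono (by omega)))
  have hpSM0 : ∀ k, StronglyMeasurable (p k) := fun k =>
    (hpSM k k k.le_succ).mono (ℱ.le k)
  have hsmdiv : ∀ {m : MeasurableSpace Ω} (f g : Ω → ℝ), StronglyMeasurable[m] f →
      StronglyMeasurable[m] g → StronglyMeasurable[m] (fun ω => f ω / g ω) := by
    intro m f g hf hg
    exact (hf.measurable.div hg.measurable).stronglyMeasurable
  -- integrability of quotients
  have hdiv_int : ∀ (f : Ω → ℝ) (k : ℕ), Integrable f μ →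
      Integrable (fun ω => f ω / p k ω) μ := by
    intro f k hf
    refine Integrable.mono' hf.norm ((hf.1.aemeasurable.div (hpSM0 k).measurable.aemeasurable).aestronglyMeasurable) ?_
    filter_upwards with ω
    rw [norm_div, Real.norm_eq_abs (p k ω), abs_of_pos (hppos k ω)]
    exact div_le_self (norm_nonneg _) (hp1 k ω)
  -- the supermartingale candidate
  set X : ℕ → Ω → ℝ := fun k ω => a k ω / p k ω
      + ∑ j ∈ Finset.range k, (b j ω - c j ω) / p (j+1) ω with hX
  have hX_int : ∀ k, Integrable (X k) μ := by
    intro k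
    exact (hdiv_int (a k) k (ha_int k)).add
      (integrable_finset_sum _ fun j _ => hdiv_int _ (j+1) ((hb_int j).sub (hc_int j)))
  have hX_adp : ∀ k, StronglyMeasurable[ℱ k] (X k) := by
    intro k
    apply StronglyMeasurable.add
    · exact hsmdiv _ _ (ha_adapted k) (hpSM k k k.le_succ)
    · apply Finset.stronglyMeasurable_fun_sum
      intro j hj
      rw [Finset.mem_range] at hj
      exact hsmdiv _ _ (((hb_adapted j).mono (ℱ.mono hj.le)).sub
        ((hc_adapted j).mono (ℱ.mono hj.le))) (hpSM k (j+1) (by omega))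
  -- the one-step supermartingale inequality
  have hXstep : ∀ k, μ[X (k+1) | ℱ k] ≤ᵐ[μ] X k := by
    intro k
    set g : Ω → ℝ := fun ω => (p (k+1) ω)⁻¹ with hgdef
    have hgSM : StronglyMeasurable[ℱ k] g :=
      (hpSM k (k+1) le_rfl).measurable.inv.stronglyMeasurable
    have hgnn : ∀ ω, 0 ≤ g ω := fun ω => inv_nonneg.2 (hppos _ ω).le
    set h : Ω → ℝ := fun ω => ∑ j ∈ Finset.range (k+1), (b j ω - c j ω) / p (j+1) ω
      with hhdef
    have hhSM : StronglyMeasurable[ℱ k] h := by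
      apply Finset.stronglyMeasurable_fun_sum
      intro j hj
      rw [Finset.mem_range] at hj
      exact hsmdiv _ _ (((hb_adapted j).mono (ℱ.mono (by omega))).sub
        ((hc_adapted j).mono (ℱ.mono (by omega)))) (hpSM k (j+1) (by omega))
    have hh_int : Integrable h μ :=
      integrable_finset_sum _ fun j _ => hdiv_int _ (j+1) ((hb_int j).sub (hc_int j))
    have hga_eq : (g * a (k+1)) = fun ω => a (k+1) ω / p (k+1) ω := by
      funext ω
      simp only [Pi.mul_apply, hgdef]
      rw [inv_mul_eq_div]
    have hga_int : Integrable (g * a (k+1)) μ := by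
      rw [hga_eq]; exact hdiv_int _ (k+1) (ha_int (k+1))
    have hsplit : X (k+1) = g * a (k+1) + h := by
      funext ω
      simp only [hX, Pi.add_apply, hga_eq, hhdef]
    have e1 : μ[X (k+1)|ℱ k] =ᵐ[μ] μ[g * a (k+1)|ℱ k] + μ[h|ℱ k] := by
      rw [hsplit]; exact condExp_add hga_int hh_int _
    have e2 : μ[g * a (k+1)|ℱ k] =ᵐ[μ] g * μ[a (k+1)|ℱ k] :=
      condExp_mul_of_stronglyMeasurable_left hgSM hga_int (ha_int (k+1))
    have e3 : μ[h|ℱ k] = h := condExp_of_stronglyMeasurable (ℱ.le k) hhSM hh_int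
    filter_upwards [e1, e2, hineq k] with ω h1 h2 h3
    have heq : (μ[X (k+1)|ℱ k]) ω = g ω * (μ[a (k+1)|ℱ k]) ω + h ω := by
      rw [h1, Pi.add_apply, h2, e3, Pi.mul_apply]
    have hmul : g ω * (μ[a (k+1)|ℱ k]) ω
        ≤ g ω * ((1 + ζ k ω) * a k ω - b k ω + c k ω) :=
      mul_le_mul_of_nonneg_left h3 (hgnn ω)
    have key : (1 + ζ k ω) * a k ω / p (k+1) ω = a k ω / p k ω := by
      rw [hpsucc k ω, mul_comm (p k ω)]
      exact mul_div_mul_left _ _ (by linarith [hζ_nonneg k ω])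
    have eqA : g ω * ((1 + ζ k ω) * a k ω - b k ω + c k ω)
        + (b k ω - c k ω) / p (k+1) ω = a k ω / p k ω := by
      calc g ω * ((1 + ζ k ω) * a k ω - b k ω + c k ω)
            + (b k ω - c k ω) / p (k+1) ω
          = ((1 + ζ k ω) * a k ω - b k ω + c k ω) / p (k+1) ω
            + (b k ω - c k ω) / p (k+1) ω := by rw [hgdef, inv_mul_eq_div]
        _ = ((1 + ζ k ω) * a k ω) / p (k+1) ω := by
            rw [← add_div]; congr 1; ring
        _ = a k ω / p k ω := key
    have hsum : h ω = ∑ j ∈ Finset.range k, (b j ω - c j ω) / p (j+1) ω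
        + (b k ω - c k ω) / p (k+1) ω := Finset.sum_range_succ _ k
    have hXk : X k ω = a k ω / p k ω
        + ∑ j ∈ Finset.range k, (b j ω - c j ω) / p (j+1) ω := rfl
    rw [heq, hsum, hXk]
    set E := (μ[a (k + 1)|ℱ k]) ω
    set R := (1 + ζ k ω) * a k ω - b k ω + c k ω
    set t := (b k ω - c k ω) / p (k+1) ω
    set q := a k ω / p k ω
    set s2 := ∑ j ∈ Finset.range k, (b j ω - c j ω) / p (j+1) ω
    linarith [hmul, eqA]
  -- partial sums of c/p
  set S : ℕ → Ω → ℝ := fun k ω => ∑ j ∈ Finset.range k, c j ω / p (j+1) ω with hS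
  have hS_SM : ∀ n k, k ≤ n + 1 → StronglyMeasurable[ℱ n] (S k) := by
    intro n k hk
    apply Finset.stronglyMeasurable_fun_sum
    intro j hj
    rw [Finset.mem_range] at hj
    exact hsmdiv _ _ ((hc_adapted j).mono (ℱ.mono (by omega))) (hpSM n (j+1) (by omega))
  -- the stopping sets
  set A : ℕ → ℕ → Set Ω := fun M k => {ω | ∀ i ≤ k, S (i+1) ω ≤ (M:ℝ)} with hA
  have hA_meas : ∀ M k, MeasurableSet[ℱ k] (A M k) := by
    intro M k
    have : A M k = ⋂ i ∈ Set.Iic k, {ω | S (i+1) ω ≤ (M:ℝ)} := by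
      ext ω; simp [hA, Set.mem_iInter]
    rw [this]
    refine MeasurableSet.biInter (Set.to_countable _) (fun i hi => ?_)
    exact measurableSet_le ((hS_SM k (i+1) (by simpa using hi)).measurable)
      measurable_const
  have hA_anti : ∀ M j k, j ≤ k → A M k ⊆ A M j := by
    intro M j k hjk ω hω i hi
    exact hω i (hi.trans hjk)
  -- the stopped process
  set Y : ℕ → ℕ → Ω → ℝ := fun M k ω => X 0 ω
      + ∑ j ∈ Finset.range k, (A M j).indicator (fun ω => X (j+1) ω - X j ω) ω with hY
  have hY_int : ∀ M k, Integrable (Y M k) μ := by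
    intro M k
    refine (hX_int 0).add (integrable_finset_sum _ fun j _ => ?_)
    exact ((hX_int (j+1)).sub (hX_int j)).indicator (ℱ.le j _ (hA_meas M j))
  have hY_adp : ∀ M, StronglyAdapted ℱ (Y M) := by
    intro M k
    refine ((hX_adp 0).mono (ℱ.mono (Nat.zero_le k))).add
      (Finset.stronglyMeasurable_fun_sum _ fun j hj => ?_)
    rw [Finset.mem_range] at hj
    refine StronglyMeasurable.indicator ?_ ((ℱ.mono hj.le) _ (hA_meas M j))
    exact ((hX_adp (j+1)).mono (ℱ.mono hj)).sub ((hX_adp j).mono (ℱ.mono hj.le))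
  have hY_step : ∀ M k, μ[Y M (k+1) | ℱ k] ≤ᵐ[μ] Y M k := by
    intro M k
    set χ : Ω → ℝ := (A M k).indicator (fun _ => (1:ℝ)) with hχdef
    set d : Ω → ℝ := fun ω => X (k+1) ω - X k ω with hddef
    have hχSM : StronglyMeasurable[ℱ k] χ :=
      stronglyMeasurable_const.indicator (hA_meas M k)
    have hχnn : ∀ ω, 0 ≤ χ ω := fun ω =>
      Set.indicator_nonneg (fun _ _ => zero_le_one) ω
    have hd_int : Integrable d μ := (hX_int (k+1)).sub (hX_int k)
    have hmul_eq : (χ * d) = (A M k).indicator d := by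
      funext ω
      by_cases hω : ω ∈ A M k <;>
        simp [hχdef, Set.indicator_of_mem, Set.indicator_of_notMem, hω]
    have hind_int : Integrable (χ * d) μ := by
      rw [hmul_eq]; exact hd_int.indicator (ℱ.le k _ (hA_meas M k))
    have hsplit : Y M (k+1) = Y M k + χ * d := by
      funext ω
      simp only [hY, Pi.add_apply, Pi.mul_apply]
      rw [Finset.sum_range_succ]
      have : (A M k).indicator (fun ω => X (k+1) ω - X k ω) ω = χ ω * d ω := by
        by_cases hω : ω ∈ A M k <;>
          simp [hχdef, hddef, Set.indicator_of_mem, Set.indicator_of_notMem, hω]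
      rw [this]
      ring
    have e1 : μ[Y M (k+1)|ℱ k] =ᵐ[μ] μ[Y M k|ℱ k] + μ[χ * d|ℱ k] := by
      rw [hsplit]; exact condExp_add (hY_int M k) hind_int _
    have e2 : μ[Y M k|ℱ k] = Y M k :=
      condExp_of_stronglyMeasurable (ℱ.le k) (hY_adp M k) (hY_int M k)
    have e3 : μ[χ * d|ℱ k] =ᵐ[μ] χ * μ[d|ℱ k] :=
      condExp_mul_of_stronglyMeasurable_left hχSM hind_int hd_int
    have e5 : μ[X k|ℱ k] = X k :=
      condExp_of_stronglyMeasurable (ℱ.le k) (hX_adp k) (hX_int k)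
    have e4 : μ[d|ℱ k] =ᵐ[μ] μ[X (k+1)|ℱ k] - X k := by
      have hde : d = X (k+1) - X k := rfl
      rw [hde]
      refine (condExp_sub (hX_int (k+1)) (hX_int k) _).trans ?_
      rw [e5]
    filter_upwards [e1, e3, e4, hXstep k] with ω h1 h3 h4 h5
    have heq : (μ[Y M (k+1)|ℱ k]) ω = Y M k ω + χ ω * ((μ[X (k+1)|ℱ k]) ω - X k ω) := by
      rw [h1, Pi.add_apply, e2, h3, Pi.mul_apply, h4, Pi.sub_apply]
    rw [heq]
    have : χ ω * ((μ[X (k+1)|ℱ k]) ω - X k ω) ≤ 0 :=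
      mul_nonpos_of_nonneg_of_nonpos (hχnn ω) (by linarith)
    linarith
  have hY_super : ∀ M, Supermartingale (Y M) ℱ μ := fun M =>
    supermartingale_nat (hY_adp M) (hY_int M) (hY_step M)
  -- representation of Y as a stopped version of X
  have hX_lb : ∀ k ω, -(S k ω) ≤ X k ω := by
    intro k ω
    have h1 : 0 ≤ a k ω / p k ω := div_nonneg (ha_nonneg k ω) (hppos k ω).le
    have h2 : -(S k ω) ≤ ∑ j ∈ Finset.range k, (b j ω - c j ω) / p (j+1) ω := by
      rw [hS]
      simp only
      rw [← Finset.sum_neg_distrib]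
      apply Finset.sum_le_sum
      intro j hj
      rw [sub_div]
      have := div_nonneg (hb_nonneg j ω) (hppos (j+1) ω).le
      linarith
    simp only [hX]
    linarith
  have hS_nonneg : ∀ k ω, 0 ≤ S k ω := fun k ω =>
    Finset.sum_nonneg fun j _ => div_nonneg (hc_nonneg j ω) (hppos _ ω).le
  have hrep : ∀ M k ω, ∃ j, j ≤ k ∧ Y M k ω = X j ω ∧ S j ω ≤ (M:ℝ) := by
    intro M k ω
    induction k with
    | zero => exact ⟨0, le_rfl, by simp [hY], by simp [hS, Nat.cast_nonneg]⟩
    | succ k ih =>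
      by_cases hmem : ω ∈ A M k
      · refine ⟨k+1, le_rfl, ?_, hmem k le_rfl⟩
        have hall : ∀ j ∈ Finset.range (k+1), (A M j).indicator
            (fun ω => X (j+1) ω - X j ω) ω = X (j+1) ω - X j ω := by
          intro j hj
          rw [Finset.mem_range] at hj
          exact Set.indicator_of_mem (hA_anti M j k (by omega) hmem) _
        simp only [hY]
        rw [Finset.sum_congr rfl hall, Finset.sum_range_sub (fun j => X j ω)]
        ring
      · obtain ⟨j, hj, h1, h2⟩ := ih
        refine ⟨j, hj.trans k.le_succ, ?_, h2⟩
        simp only [hY] at h1 ⊢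
        rw [Finset.sum_range_succ, Set.indicator_of_notMem hmem, add_zero]
        exact h1
  have hY_lb : ∀ (M k : ℕ) (ω : Ω), -(M:ℝ) ≤ Y M k ω := by
    intro M k ω
    obtain ⟨j, _, h1, h2⟩ := hrep M k ω
    rw [h1]
    exact le_trans (neg_le_neg h2) (hX_lb j ω)
  -- L1 bound
  have hY_L1 : ∀ (M k : ℕ), eLpNorm (Y M k) 1 μ ≤ ENNReal.ofReal ((∫ ω, a 0 ω ∂μ) + 2*(M:ℝ)) := by
    intro M k
    have hY0 : Y M 0 = X 0 := by funext ω; simp [hY]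
    have hX0 : X 0 = a 0 := by
      funext ω; simp [hX, hp, RSaux.P]
    have hmean : ∫ ω, Y M k ω ∂μ ≤ ∫ ω, a 0 ω ∂μ := by
      have h := (hY_super M).setIntegral_le (Nat.zero_le k) MeasurableSet.univ
      rw [setIntegral_univ, setIntegral_univ, hY0, hX0] at h
      exact h
    have habs : ∀ ω, ‖Y M k ω‖ ≤ Y M k ω + 2*(M:ℝ) := by
      intro ω
      have h1 := hY_lb M k ω
      have h2 : (0:ℝ) ≤ M := Nat.cast_nonneg M
      rw [Real.norm_eq_abs]
      rcases abs_cases (Y M k ω) with ⟨h,_⟩|⟨h,_⟩ <;> linarith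
    calc eLpNorm (Y M k) 1 μ = ENNReal.ofReal (∫ ω, ‖Y M k ω‖ ∂μ) := by
          rw [eLpNorm_one_eq_lintegral_enorm,
            ← ofReal_integral_norm_eq_lintegral_enorm (hY_int M k)]
    _ ≤ ENNReal.ofReal ((∫ ω, a 0 ω ∂μ) + 2*(M:ℝ)) := by
          apply ENNReal.ofReal_le_ofReal
          have hle : ∫ ω, ‖Y M k ω‖ ∂μ ≤ ∫ ω, (Y M k ω + 2*(M:ℝ)) ∂μ :=
            integral_mono (hY_int M k).norm ((hY_int M k).add (integrable_const _))
              habs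
          rw [integral_add (hY_int M k) (integrable_const _), integral_const] at hle
          simp only [probReal_univ, smul_eq_mul, one_mul] at hle
          linarith
  -- convergence of each Y M
  have hY_conv : ∀ M : ℕ, ∀ᵐ ω ∂μ, ∃ l, Tendsto (fun k => Y M k ω) atTop (nhds l) := by
    intro M
    have h1 := (hY_super M).neg.exists_ae_tendsto_of_bdd
      (R := ((∫ ω, a 0 ω ∂μ) + 2*(M:ℝ)).toNNReal) (fun k => by
        have he : (-(Y M)) k = -(Y M k) := rfl
        rw [he, eLpNorm_neg]
        exact hY_L1 M k)
    filter_upwards [h1] with ω ⟨l, hl⟩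
    exact ⟨-l, by simpa using hl.neg⟩
  -- conclusion
  filter_upwards [hc_sum, hζ_sum, ae_all_iff.2 hY_conv] with ω hcω hζω hYω
  obtain ⟨M, hM⟩ := exists_nat_ge (∑' j, c j ω)
  have hSle : ∀ i, S (i+1) ω ≤ (M:ℝ) := by
    intro i
    calc S (i+1) ω ≤ ∑ j ∈ Finset.range (i+1), c j ω := by
          apply Finset.sum_le_sum
          intro j _
          exact div_le_self (hc_nonneg j ω) (hp1 (j+1) ω)
    _ ≤ ∑' j, c j ω := hcω.sum_le_tsum _ (fun j _ => hc_nonneg j ω)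
    _ ≤ (M:ℝ) := hM
  have hXY : ∀ k, Y M k ω = X k ω := by
    intro k
    have hall : ∀ j ∈ Finset.range k, (A M j).indicator
        (fun ω => X (j+1) ω - X j ω) ω = X (j+1) ω - X j ω := by
      intro j _
      have hmem : ω ∈ A M j := fun i _ => hSle i
      exact Set.indicator_of_mem hmem _
    simp only [hY]
    rw [Finset.sum_congr rfl hall, Finset.sum_range_sub (fun j => X j ω)]
    ring
  obtain ⟨l, hl⟩ := hYω M
  have hl' : Tendsto (fun k => X k ω) atTop (nhds l) := by
    apply hl.congr
    intro k
    exact hXY k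
  exact RSaux.pointwise (fun j => ζ j ω) (fun k => a k ω) (fun k => b k ω)
    (fun k => c k ω) (fun k => ha_nonneg k ω) (fun k => hb_nonneg k ω)
    (fun k => hc_nonneg k ω) (fun k => hζ_nonneg k ω) hcω hζω l hl'
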